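/- Let n ≥ 2 and let D be the (n−2)×(n−2) diagonal matrix with diagonal entries (n−2)(n−1), (n−3)(n−2), …, 2·3, 1·2 (i.e., D_{ii} = (n−1−i)(n−i)), and let H be the (n−2)×(n−2) symmetric matrix with H_{ij} = −min(i, j, n−1−i, n−1−j). Then the block matrix B = [[D, H],[H, D]] is positive semidefinite for n ≤ 7, and for n = 8 the matrix B has a negative eigenvalue (equivalently, B is not positive semidefinite for n = 8). -/

import Mathlib

set_option maxHeartbeats 1000000 in
theorem toeplitz_dual_block (n : ℕ) (hn : 2 ≤ n)
    (D H : Matrix (Fin (n - 2)) (Fin (n - 2)) ℝ)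
    (hD : D = Matrix.diagonal fun i => (((n - 2 - i.val) * (n - 1 - i.val) : ℕ) : ℝ))
    (hH : ∀ i j, H i j =
      -((min (min (i.val + 1) (j.val + 1)) (min (n - 2 - i.val) (n - 2 - j.val)) : ℕ) : ℝ)) :
    (n ≤ 7 → (Matrix.fromBlocks D H H D).PosSemidef) ∧
    (n = 8 → ¬ (Matrix.fromBlocks D H H D).PosSemidef) := by
  have hHs : ∀ i j, H i j = H j i := by
    intro i j
    rw [hH, hH, neg_inj, Nat.cast_inj]
    omega
  have hDs : ∀ i j, D i j = D j i := by
    intro i j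
    rcases eq_or_ne i j with h | h
    · rw [h]
    · rw [hD, Matrix.diagonal_apply_ne _ h, Matrix.diagonal_apply_ne _ h.symm]
  have hHerm : (Matrix.fromBlocks D H H D).IsHermitian := by
    show _ = _
    ext i j
    rcases i with i | i <;> rcases j with j | j <;>
      simp only [Matrix.conjTranspose_apply, Matrix.fromBlocks_apply₁₁, Matrix.fromBlocks_apply₁₂,
        Matrix.fromBlocks_apply₂₁, Matrix.fromBlocks_apply₂₂, star_trivial]
    exacts [hDs j i, hHs j i, hHs j i, hDs j i]
  constructor
  · intro hle
    refine Matrix.PosSemidef.of_dotProduct_mulVec_nonneg hHerm ?_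
    interval_cases n
    · -- n = 2
      intro x
      have : ∀ i : Fin (2 - 2) ⊕ Fin (2 - 2), x i = 0 := by
        rintro (⟨_, h⟩ | ⟨_, h⟩) <;> omega
      simp [dotProduct, Fintype.sum_sum_type]
    · -- n = 3
      intro x
      simp only [dotProduct, Matrix.mulVec, Fintype.sum_sum_type, Fin.sum_univ_succ,
        Fin.sum_univ_zero, Matrix.fromBlocks_apply₁₁, Matrix.fromBlocks_apply₁₂,
        Matrix.fromBlocks_apply₂₁, Matrix.fromBlocks_apply₂₂, hD, hH, Matrix.diagonal_apply,
        Pi.star_apply, star_trivial]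
      norm_num [Fin.ext_iff]
      nlinarith [sq_nonneg (2 * x (Sum.inl 0) - x (Sum.inr 0)),
        sq_nonneg (x (Sum.inr 0))]
    · -- n = 4
      intro x
      simp only [dotProduct, Matrix.mulVec, Fintype.sum_sum_type, Fin.sum_univ_succ,
        Fin.sum_univ_zero, Matrix.fromBlocks_apply₁₁, Matrix.fromBlocks_apply₁₂,
        Matrix.fromBlocks_apply₂₁, Matrix.fromBlocks_apply₂₂, hD, hH, Matrix.diagonal_apply,
        Pi.star_apply, star_trivial]
      norm_num [Fin.ext_iff]
      nlinarith [sq_nonneg (6 * x (Sum.inl 0) - x (Sum.inr 0) - x (Sum.inr 1)),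
        sq_nonneg (2 * x (Sum.inl 1) - x (Sum.inr 0) - x (Sum.inr 1)),
        sq_nonneg (8 * x (Sum.inr 0) - x (Sum.inr 1)),
        sq_nonneg (x (Sum.inr 1))]
    · -- n = 5
      intro x
      simp only [dotProduct, Matrix.mulVec, Fintype.sum_sum_type, Fin.sum_univ_succ,
        Fin.sum_univ_zero, Matrix.fromBlocks_apply₁₁, Matrix.fromBlocks_apply₁₂,
        Matrix.fromBlocks_apply₂₁, Matrix.fromBlocks_apply₂₂, hD, hH, Matrix.diagonal_apply,
        Pi.star_apply, star_trivial]
      norm_num [Fin.ext_iff]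
      nlinarith [sq_nonneg (12 * x (Sum.inl 0) - x (Sum.inr 0) - x (Sum.inr 1) - x (Sum.inr 2)),
        sq_nonneg (6 * x (Sum.inl 1) - x (Sum.inr 0) - 2 * x (Sum.inr 1) - x (Sum.inr 2)),
        sq_nonneg (2 * x (Sum.inl 2) - x (Sum.inr 0) - x (Sum.inr 1) - x (Sum.inr 2)),
        sq_nonneg (135 * x (Sum.inr 0) - 11 * x (Sum.inr 1) - 9 * x (Sum.inr 2)),
        sq_nonneg (3787 * x (Sum.inr 1) - 792 * x (Sum.inr 2)),
        sq_nonneg (x (Sum.inr 2))]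
    · -- n = 6
      intro x
      simp only [dotProduct, Matrix.mulVec, Fintype.sum_sum_type, Fin.sum_univ_succ,
        Fin.sum_univ_zero, Matrix.fromBlocks_apply₁₁, Matrix.fromBlocks_apply₁₂,
        Matrix.fromBlocks_apply₂₁, Matrix.fromBlocks_apply₂₂, hD, hH, Matrix.diagonal_apply,
        Pi.star_apply, star_trivial]
      norm_num [Fin.ext_iff]
      nlinarith [sq_nonneg (20 * x (Sum.inl 0) - x (Sum.inr 0) - x (Sum.inr 1) - x (Sum.inr 2) - x (Sum.inr (Fin.succ 2))),
        sq_nonneg (12 * x (Sum.inl 1) - x (Sum.inr 0) - 2 * x (Sum.inr 1) - 2 * x (Sum.inr 2) - x (Sum.inr (Fin.succ 2))),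
        sq_nonneg (6 * x (Sum.inl 2) - x (Sum.inr 0) - 2 * x (Sum.inr 1) - 2 * x (Sum.inr 2) - x (Sum.inr (Fin.succ 2))),
        sq_nonneg (2 * x (Sum.inl (Fin.succ 2)) - x (Sum.inr 0) - x (Sum.inr 1) - x (Sum.inr 2) - x (Sum.inr (Fin.succ 2))),
        sq_nonneg (384 * x (Sum.inr 0) - 21 * x (Sum.inr 1) - 21 * x (Sum.inr 2) - 16 * x (Sum.inr (Fin.succ 2))),
        sq_nonneg (5321 * x (Sum.inr 1) - 823 * x (Sum.inr 2) - 560 * x (Sum.inr (Fin.succ 2))),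
        sq_nonneg (105 * x (Sum.inr 2) - 32 * x (Sum.inr (Fin.succ 2))),
        sq_nonneg (x (Sum.inr (Fin.succ 2)))]
    · -- n = 7
      intro x
      simp only [dotProduct, Matrix.mulVec, Fintype.sum_sum_type, Fin.sum_univ_succ,
        Fin.sum_univ_zero, Matrix.fromBlocks_apply₁₁, Matrix.fromBlocks_apply₁₂,
        Matrix.fromBlocks_apply₂₁, Matrix.fromBlocks_apply₂₂, hD, hH, Matrix.diagonal_apply,
        Pi.star_apply, star_trivial]
      norm_num [Fin.ext_iff]
      nlinarith [sq_nonneg (30 * x (Sum.inl 0) - x (Sum.inr 0) - x (Sum.inr 1) - x (Sum.inr 2) - x (Sum.inr (Fin.succ 2)) - x (Sum.inr (Fin.succ (Fin.succ 2)))),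
        sq_nonneg (20 * x (Sum.inl 1) - x (Sum.inr 0) - 2 * x (Sum.inr 1) - 2 * x (Sum.inr 2) - 2 * x (Sum.inr (Fin.succ 2)) - x (Sum.inr (Fin.succ (Fin.succ 2)))),
        sq_nonneg (12 * x (Sum.inl 2) - x (Sum.inr 0) - 2 * x (Sum.inr 1) - 3 * x (Sum.inr 2) - 2 * x (Sum.inr (Fin.succ 2)) - x (Sum.inr (Fin.succ (Fin.succ 2)))),
        sq_nonneg (6 * x (Sum.inl (Fin.succ 2)) - x (Sum.inr 0) - 2 * x (Sum.inr 1) - 2 * x (Sum.inr 2) - 2 * x (Sum.inr (Fin.succ 2)) - x (Sum.inr (Fin.succ (Fin.succ 2)))),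
        sq_nonneg (2 * x (Sum.inl (Fin.succ (Fin.succ 2))) - x (Sum.inr 0) - x (Sum.inr 1) - x (Sum.inr 2) - x (Sum.inr (Fin.succ 2)) - x (Sum.inr (Fin.succ (Fin.succ 2)))),
        sq_nonneg (1750 * x (Sum.inr 0) - 68 * x (Sum.inr 1) - 73 * x (Sum.inr 2) - 68 * x (Sum.inr (Fin.succ 2)) - 50 * x (Sum.inr (Fin.succ (Fin.succ 2)))),
        sq_nonneg (119586 * x (Sum.inr 1) - 12779 * x (Sum.inr 2) - 11664 * x (Sum.inr (Fin.succ 2)) - 7650 * x (Sum.inr (Fin.succ (Fin.succ 2)))),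
        sq_nonneg (13763623 * x (Sum.inr 2) - 3066960 * x (Sum.inr (Fin.succ 2)) - 1974600 * x (Sum.inr (Fin.succ (Fin.succ 2)))),
        sq_nonneg (319337 * x (Sum.inr (Fin.succ 2)) - 141750 * x (Sum.inr (Fin.succ (Fin.succ 2)))),
        sq_nonneg (x (Sum.inr (Fin.succ (Fin.succ 2))))]
  · intro h8
    subst h8
    rw [Matrix.posSemidef_iff_dotProduct_mulVec]; rintro ⟨-, hq⟩
    have := hq (Sum.elim ![3414, 7556, 13140, 21900, 37780, 71694] ![3702, 7862, 13545, 22575, 39310, 56394])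
    simp only [dotProduct, Matrix.mulVec, Fintype.sum_sum_type, Fin.sum_univ_succ,
      Fin.sum_univ_zero, Matrix.fromBlocks_apply₁₁, Matrix.fromBlocks_apply₁₂,
      Matrix.fromBlocks_apply₂₁, Matrix.fromBlocks_apply₂₂, hD, hH, Matrix.diagonal_apply,
      Pi.star_apply, star_trivial, Sum.elim_inl, Sum.elim_inr] at this
    norm_num [Fin.ext_iff, Matrix.cons_val_zero, Matrix.cons_val_one, Matrix.cons_val_two, Matrix.tail_cons, Matrix.head_cons] at this
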